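/- Let R be a ring and M a right R-module. If M is N₁-projective and N₂-projective, then M is (N₁ ⊕ N₂)-projective. -/

import Mathlib

universe u v

/-- `M` is `N`-projective: for every surjection `p : N → C` and every `f : M → C`,
there is `h : M → N` with `p ∘ h = f`. -/
def IsModProjective (R : Type u) [Ring R] (M : Type v) [AddCommGroup M] [Module R M]
    (N : Type v) [AddCommGroup N] [Module R N] : Prop :=
  ∀ (C : Type v) [AddCommGroup C] [Module R C] (p : N →ₗ[R] C), Function.Surjective p →
    ∀ f : M →ₗ[R] C, ∃ h : M →ₗ[R] N, p.comp h = f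

/-- If `M` is `N₁`-projective and `N₂`-projective, then `M` is `N₁ ⊕ N₂`-projective. -/
theorem isModProjective_prod
    (R : Type u) [Ring R] (M : Type v) [AddCommGroup M] [Module R M]
    (N₁ N₂ : Type v) [AddCommGroup N₁] [Module R N₁] [AddCommGroup N₂] [Module R N₂]
    (h₁ : IsModProjective R M N₁) (h₂ : IsModProjective R M N₂) :
    IsModProjective R M (N₁ × N₂) := by
  intro C _ _ p hp f
  set S := LinearMap.range (p ∘ₗ LinearMap.inr R N₁ N₂) with hS
  have hsurj : Function.Surjective (S.mkQ ∘ₗ p ∘ₗ LinearMap.inl R N₁ N₂) := by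
    intro c
    obtain ⟨c', rfl⟩ := S.mkQ_surjective c
    obtain ⟨⟨a, b⟩, rfl⟩ := hp c'
    refine ⟨a, ?_⟩
    simp only [LinearMap.comp_apply, LinearMap.inl_apply, Submodule.mkQ_apply]
    rw [Submodule.Quotient.eq]
    have : p (a, 0) - p (a, b) = -(p (0, b)) := by
      rw [← map_sub, ← map_neg]; congr 1; simp [Prod.ext_iff]
    rw [this]
    exact neg_mem ⟨b, rfl⟩
  obtain ⟨g₁, hg₁⟩ := h₁ (C ⧸ S) (S.mkQ ∘ₗ p ∘ₗ LinearMap.inl R N₁ N₂) hsurj (S.mkQ ∘ₗ f)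
  have hmem : ∀ m, (f - p ∘ₗ LinearMap.inl R N₁ N₂ ∘ₗ g₁) m ∈ S := by
    intro m
    have := congrArg (fun g => g m) hg₁
    simp only [LinearMap.comp_apply] at this
    rw [← Submodule.Quotient.mk_eq_zero]
    simp only [LinearMap.sub_apply, LinearMap.comp_apply, LinearMap.inl_apply]
    rw [Submodule.Quotient.mk_sub]
    rw [show (Submodule.Quotient.mk (f m) : C ⧸ S) = S.mkQ (f m) from rfl,
      show (Submodule.Quotient.mk (p (g₁ m, 0)) : C ⧸ S) = S.mkQ (p (g₁ m, 0)) from rfl]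
    rw [show ((g₁ m : N₁), (0 : N₂)) = LinearMap.inl R N₁ N₂ (g₁ m) from rfl, this]
    simp
  set f₂ : M →ₗ[R] S := LinearMap.codRestrict S (f - p ∘ₗ LinearMap.inl R N₁ N₂ ∘ₗ g₁) hmem
  obtain ⟨g₂, hg₂⟩ := h₂ S ((p ∘ₗ LinearMap.inr R N₁ N₂).rangeRestrict)
    (LinearMap.surjective_rangeRestrict _) f₂
  refine ⟨LinearMap.prod g₁ g₂, ?_⟩
  ext m
  have h2 := congrArg (fun g => ((g m : S) : C)) hg₂
  simp only [LinearMap.comp_apply, LinearMap.rangeRestrict, LinearMap.codRestrict_apply,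
    LinearMap.inr_apply, LinearMap.sub_apply, LinearMap.inl_apply, f₂] at h2
  have : (g₁ m, g₂ m) = ((g₁ m : N₁), (0 : N₂)) + ((0 : N₁), g₂ m) := by simp
  simp only [LinearMap.comp_apply, LinearMap.prod_apply, Function.prod, this, map_add, h2]
  abel
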